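/- For f in the class S_{m,L} (i.e., f - m·q and L·q - f are convex, with q(x)=‖x‖²/2, 0 ≤ m < L), the function V(x) := (L-m)·f_m(x) - q(∇f_m(x)) satisfies V(u) - V(y) ≤ ⟨∇f_m(u), ∇f^L(u) - ∇f^L(y)⟩ for all u, y ∈ ℝᵈ, where f_m = f - m·q and f^L = L·q - f. -/

import Mathlib

open scoped RealInnerProductSpace

variable {E : Type*} [NormedAddCommGroup E] [InnerProductSpace ℝ E] [CompleteSpace E]

lemma aux_hasGradientAt_half_normSq (x : E) :
    HasGradientAt (fun y : E => ‖y‖ ^ 2 / 2) x x := by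
  have h1 : HasFDerivAt (fun y : E => ⟪y, y⟫)
      ((fderivInnerCLM ℝ (x, x)).comp <|
        (ContinuousLinearMap.id ℝ E).prod (ContinuousLinearMap.id ℝ E)) x :=
    (hasFDerivAt_id x).inner ℝ (hasFDerivAt_id x)
  have h2 := h1.const_mul (1 / 2 : ℝ)
  have hfun : (fun y : E => ‖y‖ ^ 2 / 2) = fun y : E => (1 / 2 : ℝ) * ⟪y, y⟫ := by
    funext y; rw [real_inner_self_eq_norm_sq]; ring
  rw [hasGradientAt_iff_hasFDerivAt, hfun]
  convert h2 using 1
  ext v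
  simp [fderivInnerCLM_apply, real_inner_comm]
  ext v
  simp [fderivInnerCLM_apply, real_inner_comm, InnerProductSpace.toDual_apply_apply]
  ring

lemma aux_first_order {h : E → ℝ} (hc : ConvexOn ℝ Set.univ h) {x y g : E}
    (hg : HasGradientAt h g x) : h x + ⟪g, y - x⟫ ≤ h y := by
  set γ : ℝ → E := fun t => t • (y - x) + x with hγ
  have hγ0 : γ 0 = x := by simp [γ]
  have hγ1 : γ 1 = y := by simp [γ]
  have hφc : ConvexOn ℝ Set.univ (h ∘ (AffineMap.lineMap x y : ℝ →ᵃ[ℝ] E)) := by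
    simpa using hc.comp_affineMap (AffineMap.lineMap x y)
  have hγeq : ⇑(AffineMap.lineMap x y : ℝ →ᵃ[ℝ] E) = γ := by
    funext t; simp [AffineMap.lineMap_apply, γ, vsub_eq_sub, vadd_eq_add]
  rw [hγeq] at hφc
  have hγd : HasDerivAt γ (y - x) 0 := by
    simpa [γ] using ((hasDerivAt_id (0:ℝ)).smul_const (y - x)).add_const x
  have hd0 : HasDerivAt (h ∘ γ) ⟪g, y - x⟫ 0 := by
    have hF : HasFDerivAt h ((InnerProductSpace.toDual ℝ E) g) (γ 0) := by
      rw [hγ0]; exact hg.hasFDerivAt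
    have := hF.comp_hasDerivAt 0 hγd
    simpa [InnerProductSpace.toDual_apply_apply] using this
  have hslope := hφc.deriv_le_slope (Set.mem_univ (0 : ℝ)) (Set.mem_univ (1 : ℝ))
    zero_lt_one hd0.differentiableAt
  rw [hd0.deriv, slope_def_field] at hslope
  simp only [Function.comp_apply, hγ0, hγ1] at hslope
  have : (h y - h x) / (1 - 0) = h y - h x := by ring
  rw [this] at hslope
  linarith

set_option maxHeartbeats 2000000 in
theorem lyapunov_gradient_inequality
    (d : ℕ) (m L : ℝ) (hm : 0 ≤ m) (hmL : m < L)
    (f : EuclideanSpace ℝ (Fin d) → ℝ) (hf : Differentiable ℝ f)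
    (fm fL : EuclideanSpace ℝ (Fin d) → ℝ)
    (hfm_def : fm = fun x => f x - m * (‖x‖ ^ 2 / 2))
    (hfL_def : fL = fun x => L * (‖x‖ ^ 2 / 2) - f x)
    (hfm : ConvexOn ℝ Set.univ fm) (hfL : ConvexOn ℝ Set.univ fL)
    (V : EuclideanSpace ℝ (Fin d) → ℝ)
    (hV : V = fun x => (L - m) * fm x - ‖gradient fm x‖ ^ 2 / 2) :
    ∀ u y, V u - V y ≤ ⟪gradient fm u, gradient fL u - gradient fL y⟫ := by
  have hfd : ∀ x, HasGradientAt f (gradient f x) x :=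
    fun x => (hf x).hasGradientAt
  have hfmG : ∀ x, HasGradientAt fm (gradient f x - m • x) x := by
    intro x
    rw [hfm_def, hasGradientAt_iff_hasFDerivAt, map_sub, map_smul]
    exact ((hfd x).hasFDerivAt).sub
      (((aux_hasGradientAt_half_normSq x).hasFDerivAt).const_mul m)
  have hgm : ∀ x, HasGradientAt fm (gradient fm x) x :=
    fun x => ((hfmG x).differentiableAt).hasGradientAt
  have hfLval : ∀ x, fL x = (L - m) * (‖x‖ ^ 2 / 2) - fm x := by
    intro x; rw [hfL_def, hfm_def]; ring
  have hfLG : ∀ x, HasGradientAt fL ((L - m) • x - gradient fm x) x := by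
    intro x
    have hfun : fL = fun y => (L - m) * (‖y‖ ^ 2 / 2) - fm y := funext hfLval
    rw [hfun, hasGradientAt_iff_hasFDerivAt, map_sub, map_smul]
    exact (((aux_hasGradientAt_half_normSq x).hasFDerivAt).const_mul (L - m)).sub
      (hgm x).hasFDerivAt
  have hgL : ∀ x, gradient fL x = (L - m) • x - gradient fm x :=
    fun x => (hfLG x).gradient
  intro u y
  set gu : EuclideanSpace ℝ (Fin d) := gradient fm u with hgu
  set gy : EuclideanSpace ℝ (Fin d) := gradient fm y with hgy
  set w : EuclideanSpace ℝ (Fin d) := gy - gu with hw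
  set c : ℝ := (L - m)⁻¹ with hc
  have hLm : (0:ℝ) < L - m := by linarith
  set p : EuclideanSpace ℝ (Fin d) := y - c • w with hp
  have h1 : fm u + ⟪gu, p - u⟫ ≤ fm p := aux_first_order hfm (hgm u) (y := p)
  have h2 : fL y + ⟪(L - m) • y - gy, p - y⟫ ≤ fL p :=
    aux_first_order hfL (hfLG y) (y := p)
  rw [hfLval y, hfLval p] at h2
  simp only [hV, hgL]
  rw [← hgu, ← hgy]
  have hpy : p - y = -(c • w) := by simp [hp]
  have hpu : p - u = (y - u) - c • w := by simp only [hp]; abel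
  have e1 : ⟪gu, p - u⟫ = ⟪gu, y - u⟫ - c * ⟪gu, w⟫ := by
    rw [hpu, inner_sub_right, inner_smul_right]
  have e2 : ⟪(L - m) • y - gy, p - y⟫ = -⟪y, w⟫ + c * ⟪gy, w⟫ := by
    rw [hpy]
    simp only [inner_neg_right, inner_sub_left, inner_smul_left, inner_smul_right,
      RCLike.star_def, starRingEnd_apply, star_trivial, hc]
    field_simp
    ring
  have e3 : (L - m) * (‖p‖ ^ 2 / 2)
      = (L - m) * (‖y‖ ^ 2 / 2) - ⟪y, w⟫ + c * ‖w‖ ^ 2 / 2 := by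
    have e3' : ‖p‖ ^ 2 = ‖y‖ ^ 2 - 2 * (c * ⟪y, w⟫) + c ^ 2 * ‖w‖ ^ 2 := by
      rw [hp, ← real_inner_self_eq_norm_sq, ← real_inner_self_eq_norm_sq (x := y),
        ← real_inner_self_eq_norm_sq (x := w), inner_sub_sub_self]
      simp [inner_smul_left, inner_smul_right, real_inner_comm w y, norm_smul, mul_pow,
        Real.norm_eq_abs, sq_abs]
      ring
    rw [e3', hc]
    field_simp
  rw [e1] at h1
  rw [e2, e3] at h2
  have egw : ⟪gu, w⟫ = ⟪gu, gy⟫ - ‖gu‖ ^ 2 := by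
    rw [hw, inner_sub_right, real_inner_self_eq_norm_sq]
  have egyw : ⟪gy, w⟫ = ‖gy‖ ^ 2 - ⟪gu, gy⟫ := by
    rw [hw, inner_sub_right, real_inner_self_eq_norm_sq, real_inner_comm]
  have enw : ‖w‖ ^ 2 = ‖gy‖ ^ 2 - 2 * ⟪gu, gy⟫ + ‖gu‖ ^ 2 := by
    rw [hw, ← real_inner_self_eq_norm_sq, inner_sub_sub_self,
      real_inner_self_eq_norm_sq, real_inner_self_eq_norm_sq, real_inner_comm]
    ring
  have etgt : ⟪gu, ((L - m) • u - gu) - ((L - m) • y - gy)⟫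
      = (L - m) * ⟪gu, u⟫ - (L - m) * ⟪gu, y⟫ - ‖gu‖ ^ 2 + ⟪gu, gy⟫ := by
    rw [inner_sub_right, inner_sub_right, inner_sub_right, inner_smul_right,
      inner_smul_right, real_inner_self_eq_norm_sq]
    ring
  have eyu : ⟪gu, y - u⟫ = ⟪gu, y⟫ - ⟪gu, u⟫ := inner_sub_right _ _ _
  rw [etgt]
  rw [eyu] at h1
  have hstar : fm u + (⟪gu, y⟫ - ⟪gu, u⟫) + c * ‖w‖ ^ 2 / 2 ≤ fm y := by
    have hcgw : c * ⟪gy, w⟫ - c * ⟪gu, w⟫ = c * ‖w‖ ^ 2 := by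
      rw [egw, egyw, enw]; ring
    linarith [h1, h2, hcgw]
  have hmul := mul_le_mul_of_nonneg_left hstar hLm.le
  have hinv : (L - m) * (c * ‖w‖ ^ 2 / 2) = ‖w‖ ^ 2 / 2 := by
    rw [hc]; field_simp
  linarith [hmul, hinv, enw]
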